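/- arXiv:1508.05018 — 5 statements merged into one kernel-verified Lean document; each statement's English description precedes it below -/
import Mathlib

section
/- A group G is residually finite if and only if G admits a semi-conjugacy-separating family of finite-index subgroups. -/
/-- A family `σ` of subgroups of `G` is semi-conjugacy-separating. -/
def SemiConjSep {G : Type*} [Group G] (σ : Set (Subgroup G)) : Prop :=
  ∀ F : Finset G, ∃ H ∈ σ,
    (⋃ k : G, (fun x => k * x * k⁻¹) '' (H : Set G)) ∩ ↑F ⊆ {1}

/-- a group is residually finite if and only if it admits a
semi-conjugacy-separating family of finite-index subgroups. -/
theorem residuallyFinite_iff_semiConjSep {G : Type*} [Group G] :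
    (∀ g : G, g ≠ 1 → ∃ N : Subgroup G, N.Normal ∧ N.FiniteIndex ∧ g ∉ N) ↔
    (∃ σ : Set (Subgroup G), (∀ H ∈ σ, H.FiniteIndex) ∧ SemiConjSep σ) := by
  constructor
  · intro h
    refine ⟨{H | H.FiniteIndex ∧ H.Normal}, fun H hH => hH.1, ?_⟩
    intro F
    classical
    choose N hNnorm hNfi hNg using fun g (hg : g ∈ F.filter (· ≠ 1)) =>
      h g (by simpa using (Finset.mem_filter.mp hg).2)
    set H : Subgroup G := ⨅ g : F.filter (· ≠ 1), N g g.2 with hH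
    have hHfi : H.FiniteIndex := Subgroup.finiteIndex_iInf fun g => hNfi g g.2
    have hHnorm : H.Normal := by
      refine ⟨fun x hx k => ?_⟩
      simp only [hH, Subgroup.mem_iInf] at hx ⊢
      intro g
      exact (hNnorm g g.2).conj_mem x (hx g) k
    refine ⟨H, ⟨hHfi, hHnorm⟩, ?_⟩
    rintro x ⟨hx1, hx2⟩
    simp only [Set.mem_iUnion, Set.mem_image] at hx1
    obtain ⟨k, y, hy, rfl⟩ := hx1
    by_contra hne
    simp only [Set.mem_singleton_iff] at hne
    have hmem : k * y * k⁻¹ ∈ H := hHnorm.conj_mem y hy k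
    have hf : k * y * k⁻¹ ∈ F.filter (· ≠ 1) := Finset.mem_filter.mpr ⟨hx2, hne⟩
    have : k * y * k⁻¹ ∈ N _ hf := by
      have := Subgroup.mem_iInf.mp hmem ⟨_, hf⟩
      exact this
    exact hNg _ hf this
  · rintro ⟨σ, hfi, hsep⟩ g hg
    obtain ⟨H, hHσ, hH⟩ := hsep {g}
    have : H.FiniteIndex := hfi H hHσ
    refine ⟨H.normalCore, H.normalCore_normal, Subgroup.finiteIndex_normalCore H, ?_⟩
    intro hgmem
    have hgH : g ∈ H := H.normalCore_le hgmem
    have : g ∈ ({1} : Set G) := hH ⟨Set.mem_iUnion.mpr ⟨1, g, hgH, by group⟩, by simp⟩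
    exact hg this
end

section
/- Let X be a metric space with a group H acting properly by isometries, let Y = X/H with quotient map φ : X → Y, and equip Y with the quotient metric d_Y(φ(x), φ(x')) = inf_{h,h' ∈ H} d_X(hx, h'x'). Suppose x ∈ X and R > 0 are such that φ is injective on the closed ball B_{3R}(x). Then φ restricted to the closed ball B_R(x) is an isometry onto its image. -/
/-- if a group `H` acts properly by isometries on a metric space `X`, `Y = X/H`
carries the quotient metric, and the quotient map is injective on the closed ball
`B_{3R}(x)`, then the quotient map restricted to `B_R(x)` is an isometry onto its image. -/
theorem quotient_isometry_on_ball {X : Type*} [MetricSpace X] {H : Type*} [Group H]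
    [MulAction H X]
    (hiso : ∀ (h : H) (a b : X), dist (h • a) (h • b) = dist a b)
    (hproper : ∀ (a b : X) (r : ℝ), {h : H | dist a (h • b) ≤ r}.Finite)
    (dY : Quotient (MulAction.orbitRel H X) → Quotient (MulAction.orbitRel H X) → ℝ)
    (hdY : ∀ a b : X, dY (Quotient.mk (MulAction.orbitRel H X) a)
        (Quotient.mk (MulAction.orbitRel H X) b) = sInf {r : ℝ | ∃ h : H, dist a (h • b) = r})
    (x : X) (R : ℝ) (hR : 0 < R)
    (hinj : Set.InjOn (Quotient.mk (MulAction.orbitRel H X)) (Metric.closedBall x (3 * R))) :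
    ∀ y ∈ Metric.closedBall x R, ∀ z ∈ Metric.closedBall x R,
      dY (Quotient.mk (MulAction.orbitRel H X) y) (Quotient.mk (MulAction.orbitRel H X) z)
        = dist y z := by
  intro y hy z hz
  rw [Metric.mem_closedBall] at hy hz
  rw [hdY]
  have hmem : dist y z ∈ {r : ℝ | ∃ h : H, dist y (h • z) = r} :=
    ⟨1, by rw [one_smul]⟩
  apply le_antisymm
  · exact csInf_le ⟨0, fun r ⟨h, hr⟩ => hr ▸ dist_nonneg⟩ hmem
  · apply le_csInf ⟨_, hmem⟩
    rintro r ⟨h, rfl⟩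
    by_contra hlt
    push_neg at hlt
    have hball : h • z ∈ Metric.closedBall x (3 * R) := by
      rw [Metric.mem_closedBall]
      have : dist x (h • z) ≤ dist x y + dist y (h • z) := dist_triangle _ _ _
      have h2 : dist y z ≤ dist y x + dist x z := dist_triangle _ _ _
      nlinarith [hlt, this, h2, dist_comm x y, dist_comm (h • z) x, dist_comm x z, dist_comm z x]
    have hz3 : z ∈ Metric.closedBall x (3 * R) := by
      rw [Metric.mem_closedBall]; nlinarith
    have heq : (Quotient.mk (MulAction.orbitRel H X)) (h • z)
        = (Quotient.mk (MulAction.orbitRel H X)) z :=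
      Quotient.sound ⟨h, rfl⟩
    have := hinj hball hz3 heq
    rw [this] at hlt
    exact lt_irrefl _ hlt
end

section
/- Let 𝒳 = {(X_α, d_α)}_{α ∈ I} be a family of metric spaces. Then the uniform asymptotic dimension of 𝒳 equals the supremum, over all countable subsets J ⊆ I, of the uniform asymptotic dimension of the subfamily {(X_α, d_α)}_{α ∈ J}. -/
noncomputable section

open Set

/-- A cover is `S`-bounded if every member has diameter at most `S`. -/
def IsCoverBounded {α : Type*} (d : α → α → ℝ) (S : ℝ) (𝒰 : Set (Set α)) : Prop :=
  ∀ U ∈ 𝒰, ∀ x ∈ U, ∀ y ∈ U, d x y ≤ S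

/-- A cover has Lebesgue number at least `R` if every nonempty set of diameter at most `R`
is contained in some member of the cover. -/
def HasLebesgueNumber {α : Type*} (d : α → α → ℝ) (R : ℝ) (𝒰 : Set (Set α)) : Prop :=
  ∀ F : Set α, F.Nonempty → (∀ x ∈ F, ∀ y ∈ F, d x y ≤ R) → ∃ U ∈ 𝒰, F ⊆ U

/-- A cover has multiplicity at most `m`: any more than `m` distinct members have empty
intersection. -/
def MultiplicityLE {α : Type*} (𝒰 : Set (Set α)) (m : ℕ) : Prop :=
  ∀ V : Finset (Set α), ↑V ⊆ 𝒰 → m < V.card → ⋂₀ (V : Set (Set α)) = ∅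

/-- A family of metric spaces has asymptotic dimension at most `n` uniformly. -/
def FamAsdimLE {I : Type*} (X : I → Type*) (d : ∀ i, X i → X i → ℝ) (n : ℕ) : Prop :=
  ∀ R : ℝ, 0 < R → ∃ S : ℝ, 0 < S ∧ ∀ i, ∃ 𝒰 : Set (Set (X i)),
    ⋃₀ 𝒰 = Set.univ ∧ IsCoverBounded (d i) S 𝒰 ∧
    HasLebesgueNumber (d i) R 𝒰 ∧ MultiplicityLE 𝒰 (n + 1)

/-- The (uniform) asymptotic dimension of a family of metric spaces, as an extended natural
number. -/
def famAsdim {I : Type*} (X : I → Type*) (d : ∀ i, X i → X i → ℝ) : ℕ∞ :=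
  sInf ((fun n : ℕ => (n : ℕ∞)) '' {n : ℕ | FamAsdimLE X d n})

/-- The asymptotic dimension of a single metric space. -/
def spaceAsdim (X : Type*) (d : X → X → ℝ) : ℕ∞ :=
  famAsdim (fun _ : Unit => X) (fun _ => d)

lemma famAsdimLE_mono {I : Type*} (X : I → Type*) (d : ∀ i, X i → X i → ℝ) {m n : ℕ}
    (h : m ≤ n) (hm : FamAsdimLE X d m) : FamAsdimLE X d n := by
  intro R hR
  obtain ⟨S, hS, hi⟩ := hm R hR
  refine ⟨S, hS, fun i => ?_⟩
  obtain ⟨𝒰, h1, h2, h3, h4⟩ := hi i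
  exact ⟨𝒰, h1, h2, h3, fun V hV hc => h4 V hV (lt_of_le_of_lt (by omega) hc)⟩

lemma famAsdim_le_iff {I : Type*} (X : I → Type*) (d : ∀ i, X i → X i → ℝ) (n : ℕ) :
    famAsdim X d ≤ (n : ℕ∞) ↔ FamAsdimLE X d n := by
  constructor
  · intro h
    by_contra hn
    have hlt : famAsdim X d < ((n + 1 : ℕ) : ℕ∞) :=
      lt_of_le_of_lt h (by exact_mod_cast lt_add_one n)
    obtain ⟨b, hb, hbn⟩ := sInf_lt_iff.mp hlt
    obtain ⟨k, hk, rfl⟩ := hb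
    have hkn : k ≤ n := by
      have h1 : (k : ℕ∞) < (n : ℕ∞) + 1 := by simpa using hbn
      have h2 : k < n + 1 := by exact_mod_cast h1
      omega
    exact hn (famAsdimLE_mono X d hkn hk)
  · intro h
    exact sInf_le ⟨n, h, rfl⟩

lemma famAsdimLE_restrict {I : Type*} (X : I → Type*) (d : ∀ i, X i → X i → ℝ)
    (J : Set I) {n : ℕ} (h : FamAsdimLE X d n) :
    FamAsdimLE (fun j : J => X j) (fun j => d j) n := by
  intro R hR
  obtain ⟨S, hS, hi⟩ := h R hR
  exact ⟨S, hS, fun j => hi j⟩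

lemma famAsdimLE_of_countable {I : Type*} (X : I → Type*) (d : ∀ i, X i → X i → ℝ) (n : ℕ)
    (h : ∀ J : Set I, J.Countable → FamAsdimLE (fun j : J => X j) (fun j => d j) n) :
    FamAsdimLE X d n := by
  by_contra hn
  rw [FamAsdimLE] at hn
  push_neg at hn
  obtain ⟨R, hR, hfail⟩ := hn
  choose f hf using fun k : ℕ => hfail ((k : ℝ) + 1) (by positivity)
  set J : Set I := Set.range f with hJ
  obtain ⟨S, hS, hcov⟩ := h J (Set.countable_range f) R hR
  set k : ℕ := ⌈S⌉₊ with hk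
  obtain ⟨𝒰, h1, h2, h3, h4⟩ := hcov ⟨f k, Set.mem_range_self k⟩
  have hbound : IsCoverBounded (d (f k)) ((k : ℝ) + 1) 𝒰 := by
    intro U hU x hx y hy
    exact le_trans (h2 U hU x hx y hy)
      (le_trans (Nat.le_ceil S) (le_of_lt (lt_add_one (k : ℝ))))
  exact hf k 𝒰 h1 hbound h3 h4

/-- the uniform asymptotic dimension of a family of metric spaces equals the
supremum of the uniform asymptotic dimensions of its countable subfamilies. -/
theorem famAsdim_eq_iSup_countable {I : Type*} (X : I → Type*)
    (d : ∀ i, X i → X i → ℝ) :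
    famAsdim X d =
      ⨆ (J : Set I) (_ : J.Countable), famAsdim (fun j : J => X j) (fun j => d j) := by
  refine le_antisymm ?_ (iSup₂_le fun J _ =>
    sInf_le_sInf (Set.image_mono fun n hn => famAsdimLE_restrict X d J hn))
  set s := ⨆ (J : Set I) (_ : J.Countable), famAsdim (fun j : J => X j) (fun j => d j)
    with hs
  rcases eq_or_ne s ⊤ with h | h
  · simp [h]
  · obtain ⟨m, hm⟩ := WithTop.ne_top_iff_exists.mp h
    have hm' : (m : ℕ∞) = s := by exact_mod_cast hm
    rw [← hm', famAsdim_le_iff]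
    refine famAsdimLE_of_countable X d m fun J hJ => ?_
    rw [← famAsdim_le_iff, hm']
    exact le_iSup₂ (f := fun (J : Set I) (_ : J.Countable) =>
      famAsdim (fun j : J => X j) (fun j => d j)) J hJ
end
end

section
/- Every countable locally finite group, equipped with any proper right-invariant metric, has asymptotic dimension 0. -/
noncomputable section

open Set

/-- `d` is a proper right-invariant metric on the group `G`. -/
structure IsPRIMetric (G : Type*) [Group G] (d : G → G → ℝ) : Prop where
  refl : ∀ g : G, d g g = 0
  pos : ∀ g h : G, g ≠ h → 0 < d g h
  symm : ∀ g h : G, d g h = d h g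
  triangle : ∀ g h k : G, d g k ≤ d g h + d h k
  right_inv : ∀ g h k : G, d (g * k) (h * k) = d g h
  proper : ∀ r : ℝ, {g : G | d 1 g ≤ r}.Finite

/-- The quotient (pseudo)metric induced by a map `f` on its codomain. -/
def pushDist {G K : Type*} (f : G → K) (d : G → G → ℝ) : K → K → ℝ :=
  fun a b => sInf {r : ℝ | ∃ x y : G, f x = a ∧ f y = b ∧ d x y = r}

/-- The quotient metric on the left coset space `G ⧸ H`. -/
def quotDist {G : Type*} [Group G] (d : G → G → ℝ) (H : Subgroup G) :
    (G ⧸ H) → (G ⧸ H) → ℝ :=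
  pushDist (fun g : G => (g : G ⧸ H)) d

/-- every countable locally finite group, with any proper right-invariant
metric, has asymptotic dimension 0. -/
theorem asdim_locally_finite_eq_zero {G : Type*} [Group G] [Countable G]
    (hLF : ∀ S : Finset G, ((Subgroup.closure (↑S : Set G) : Subgroup G) : Set G).Finite)
    (d : G → G → ℝ) (hd : IsPRIMetric G d) :
    spaceAsdim G d = 0 := by
  refine le_antisymm ?_ zero_le
  apply sInf_le
  refine ⟨0, ?_, rfl⟩
  intro R hR
  have hBfin := hd.proper R
  set H : Subgroup G := Subgroup.closure (↑hBfin.toFinset : Set G) with hHdef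
  have hHfin : ((H : Set G)).Finite := hLF _
  have h1H : (1 : G) ∈ H := H.one_mem
  have h1H' : (1 : G) ∈ hHfin.toFinset := by simpa using h1H
  have hne : hHfin.toFinset.Nonempty := ⟨1, h1H'⟩
  set M := hHfin.toFinset.sup' hne (fun g => d 1 g) with hMdef
  have hM0 : 0 ≤ M := by
    have := Finset.le_sup' (f := fun g => d 1 g) h1H'
    rw [hd.refl] at this; exact this
  have hMle : ∀ g : G, g ∈ H → d 1 g ≤ M := fun g hg =>
    Finset.le_sup' (f := fun g => d 1 g) (by simpa using hg)
  refine ⟨2 * M + 1, by linarith, fun _ => ?_⟩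
  set U : G → Set G := fun g => {x : G | x * g⁻¹ ∈ H} with hUdef
  have memU : ∀ x g : G, x ∈ U g ↔ x * g⁻¹ ∈ H := fun _ _ => Iff.rfl
  refine ⟨Set.range U, ?_, ?_, ?_, ?_⟩
  · ext x
    simp only [Set.mem_sUnion, Set.mem_range, Set.mem_univ, iff_true]
    exact ⟨U x, ⟨x, rfl⟩, by simp [memU, h1H]⟩
  · rintro V ⟨g, rfl⟩ x hx y hy
    have hx' : x * g⁻¹ ∈ H := hx
    have hy' : y * g⁻¹ ∈ H := hy
    have hxy : d x y = d (x * g⁻¹) (y * g⁻¹) := by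
      have := hd.right_inv (x * g⁻¹) (y * g⁻¹) g
      simpa using this
    have h1 : d (x * g⁻¹) 1 ≤ M := by rw [hd.symm]; exact hMle _ hx'
    have h2 : d 1 (y * g⁻¹) ≤ M := hMle _ hy'
    have := hd.triangle (x * g⁻¹) 1 (y * g⁻¹)
    show d x y ≤ 2 * M + 1
    rw [hxy]; linarith
  · rintro F ⟨x0, hx0⟩ hdiam
    refine ⟨U x0, ⟨x0, rfl⟩, fun y hy => ?_⟩
    show y * x0⁻¹ ∈ H
    apply Subgroup.subset_closure
    simp only [Finset.mem_coe, Set.Finite.mem_toFinset, Set.mem_setOf_eq]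
    show d 1 (y * x0⁻¹) ≤ R
    have h1 : d y x0 = d (y * x0⁻¹) 1 := by
      have := hd.right_inv (y * x0⁻¹) 1 x0
      simpa using this
    rw [hd.symm, ← h1]
    exact hdiam y hy x0 hx0
  · intro V hV hcard
    have key : ∀ A ∈ V, ∀ B ∈ V, A ≠ B → A ∩ B = ∅ := by
      intro A hA B hB hAB
      by_contra hne'
      obtain ⟨x, hxA, hxB⟩ := Set.nonempty_iff_ne_empty.mpr hne'
      apply hAB
      obtain ⟨g, rfl⟩ := hV hA
      obtain ⟨g', rfl⟩ := hV hB
      have h1 : x * g⁻¹ ∈ H := hxA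
      have h2 : x * g'⁻¹ ∈ H := hxB
      ext y
      simp only [memU]
      constructor
      · intro hy
        have : y * g'⁻¹ = (y * g⁻¹) * (x * g⁻¹)⁻¹ * (x * g'⁻¹) := by group
        rw [this]; exact H.mul_mem (H.mul_mem hy (H.inv_mem h1)) h2
      · intro hy
        have : y * g⁻¹ = (y * g'⁻¹) * (x * g'⁻¹)⁻¹ * (x * g⁻¹) := by group
        rw [this]; exact H.mul_mem (H.mul_mem hy (H.inv_mem h2)) h1
    obtain ⟨A, hA, B, hB, hAB⟩ := Finset.one_lt_card.mp hcard
    rw [Set.eq_empty_iff_forall_notMem]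
    intro x hx
    have hxA : x ∈ A := hx A hA
    have hxB : x ∈ B := hx B hB
    have hmem : x ∈ A ∩ B := ⟨hxA, hxB⟩
    rw [key A hA B hB hAB] at hmem
    exact hmem
end
end

section
/- Let G be a residually finite group with a fixed proper right-invariant metric, and let σ be a semi-conjugacy-separating family of finite-index subgroups of G. Then asdim(G) ≤ asdim(□_σ G), where □_σ G is the box space of G with respect to σ. -/
noncomputable section

open Set

section AuxLemmas
variable {G : Type*} [Group G] {d : G → G → ℝ}

lemma IsPRIMetric.nonneg (hd : IsPRIMetric G d) (x y : G) : 0 ≤ d x y := by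
  have h := hd.triangle x y x
  rw [hd.refl, hd.symm y x] at h
  linarith

lemma quotDist_mk_le (hd : IsPRIMetric G d) (H : Subgroup G) (x y : G) :
    quotDist d H (x : G ⧸ H) (y : G ⧸ H) ≤ d x y := by
  apply csInf_le
  · exact ⟨0, fun r ⟨a, b, _, _, hr⟩ => hr ▸ hd.nonneg a b⟩
  · exact ⟨x, y, rfl, rfl, rfl⟩

lemma exists_of_quotDist_lt (hd : IsPRIMetric G d) (H : Subgroup G) (x y : G) {c : ℝ}
    (hlt : quotDist d H (x : G ⧸ H) (y : G ⧸ H) < c) :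
    ∃ h ∈ H, d (x * h) y < c := by
  have hne : {r : ℝ | ∃ a b : G, ((a : G ⧸ H) = (x : G ⧸ H)) ∧ ((b : G ⧸ H) = (y : G ⧸ H)) ∧
      d a b = r}.Nonempty := ⟨d x y, x, y, rfl, rfl, rfl⟩
  obtain ⟨r, ⟨a, b, ha, hb, hr⟩, hrc⟩ := exists_lt_of_csInf_lt hne hlt
  rw [QuotientGroup.eq] at ha hb
  refine ⟨(a⁻¹ * x)⁻¹ * (b⁻¹ * y), H.mul_mem (H.inv_mem ha) hb, ?_⟩
  have e1 : x * ((a⁻¹ * x)⁻¹ * (b⁻¹ * y)) = (a * b⁻¹) * y := by group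
  have e2 : d ((a * b⁻¹) * y) y = d (a * b⁻¹) 1 := by
    have := hd.right_inv (a * b⁻¹) 1 y; simpa using this
  have e3 : d a b = d (a * b⁻¹) 1 := by
    have := hd.right_inv (a * b⁻¹) 1 b; simpa using this
  rw [e1, e2, ← e3, hr]; exact hrc

end AuxLemmas

/-- for a residually finite group `G` with a proper right-invariant metric
and a semi-conjugacy-separating family `σ` of finite-index subgroups, the asymptotic
dimension of `G` is at most that of the box space `□_σ G` (equivalently, of the box family
of finite quotients `G ⧸ H`, `H ∈ σ`, with their quotient metrics). -/
theorem asdim_le_asdim_box {G : Type*} [Group G]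
    (d : G → G → ℝ) (hd : IsPRIMetric G d)
    (hRF : ∀ g : G, g ≠ 1 → ∃ N : Subgroup G, N.Normal ∧ N.FiniteIndex ∧ g ∉ N)
    (σ : Set (Subgroup G)) (hfi : ∀ H ∈ σ, H.FiniteIndex) (hσ : SemiConjSep σ) :
    spaceAsdim G d ≤
      famAsdim (fun H : σ => G ⧸ (H : Subgroup G))
        (fun H => quotDist d (H : Subgroup G)) := by
  classical
  refine sInf_le_sInf (Set.image_mono ?_)
  intro n hn
  simp only [Set.mem_setOf_eq] at hn ⊢
  intro R hR
  obtain ⟨S, hS, hcov⟩ := hn R hR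
  set ρ : ℝ := 2 * S + 2 * R with hρdef
  have hρpos : 0 < ρ := by positivity
  obtain ⟨H, hHσ, hsep⟩ := hσ (hd.proper (2 * ρ + 1)).toFinset
  obtain ⟨𝒰, hcovU, hbddU, hlebU, hmulU⟩ := hcov ⟨H, hHσ⟩
  -- basepoints in each member of the cover
  let base : Set (G ⧸ H) → G := fun U =>
    if hU : ∃ x : G, (x : G ⧸ H) ∈ U then hU.choose else 1
  have hbase : ∀ (U : Set (G ⧸ H)) (x : G), (x : G ⧸ H) ∈ U →
      ((base U : G) : G ⧸ H) ∈ U := by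
    intro U x hx
    have hU : ∃ x : G, (x : G ⧸ H) ∈ U := ⟨x, hx⟩
    simp only [base, dif_pos hU]
    exact hU.choose_spec
  -- separation: distinct points of a fiber are far apart
  have hsep' : ∀ (x : G) (h h' : G), h ∈ H → h' ∈ H →
      d (x * h) (x * h') ≤ 2 * ρ → h = h' := by
    intro x h h' hh hh' hle
    by_contra hne
    have hne1 : x * (h * h'⁻¹) * x⁻¹ ≠ 1 := by
      intro hc
      apply hne
      have : h * h'⁻¹ = 1 := by
        have := congrArg (fun z => x⁻¹ * z * x) hc
        simpa [mul_assoc] using this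
      rw [← mul_inv_eq_one]; exact this
    have hconj : x * (h * h'⁻¹) * x⁻¹ ∈
        ⋃ k : G, (fun z => k * z * k⁻¹) '' (H : Set G) :=
      Set.mem_iUnion.2 ⟨x, ⟨h * h'⁻¹, H.mul_mem hh (H.inv_mem hh'), rfl⟩⟩
    have e1 : x * h = (x * (h * h'⁻¹) * x⁻¹) * (x * h') := by group
    have key := hd.right_inv (x * (h * h'⁻¹) * x⁻¹) 1 (x * h')
    rw [one_mul, ← e1] at key
    -- key : d (x*h) (x*h') = d (x*(h*h'⁻¹)*x⁻¹) 1
    have hle2 : d 1 (x * (h * h'⁻¹) * x⁻¹) ≤ 2 * ρ + 1 := by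
      rw [hd.symm, ← key]; linarith
    have hmemF : x * (h * h'⁻¹) * x⁻¹ ∈ ((hd.proper (2 * ρ + 1)).toFinset : Set G) := by
      rw [Set.Finite.coe_toFinset]; exact hle2
    exact hne1 (hsep ⟨hconj, hmemF⟩)
  -- sheets
  let sheet : Set (G ⧸ H) → G → Set G := fun U h =>
    {y : G | (y : G ⧸ H) ∈ U ∧ d (base U * h) y ≤ ρ}
  have hnear : ∀ U ∈ 𝒰, ∀ g : G, (g : G ⧸ H) ∈ U →
      ∃ h ∈ H, d (base U * h) g < S + R := by
    intro U hU g hg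
    have hb := hbase U g hg
    have h1 : quotDist d H ((base U : G) : G ⧸ H) (g : G ⧸ H) ≤ S := hbddU U hU _ hb _ hg
    exact exists_of_quotDist_lt hd H _ g (lt_of_le_of_lt h1 (by linarith))
  refine ⟨2 * ρ, by linarith, fun _ => ⟨{V | ∃ U ∈ 𝒰, ∃ h ∈ H, V = sheet U h},
    ?_, ?_, ?_, ?_⟩⟩
  · -- covers
    ext g
    simp only [Set.mem_sUnion, Set.mem_univ, iff_true]
    have : (g : G ⧸ H) ∈ ⋃₀ 𝒰 := by rw [hcovU]; trivial
    obtain ⟨U, hU, hg⟩ := this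
    obtain ⟨h, hh, hlt⟩ := hnear U hU g hg
    exact ⟨sheet U h, ⟨U, hU, h, hh, rfl⟩, hg, by linarith⟩
  · -- bounded
    rintro V ⟨U, hU, h, hh, rfl⟩ x hx y hy
    obtain ⟨-, hx2⟩ := hx
    obtain ⟨-, hy2⟩ := hy
    have := hd.triangle x (base U * h) y
    rw [hd.symm x (base U * h)] at this
    linarith
  · -- Lebesgue number
    intro F hFne hFdiam
    have hdiam' : ∀ a ∈ (fun y : G => (y : G ⧸ H)) '' F, ∀ b ∈ (fun y : G => (y : G ⧸ H)) '' F,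
        quotDist d H a b ≤ R := by
      rintro a ⟨x, hx, rfl⟩ b ⟨y, hy, rfl⟩
      exact le_trans (quotDist_mk_le hd H x y) (hFdiam x hx y hy)
    obtain ⟨U, hU, hsub⟩ := hlebU ((fun y : G => (y : G ⧸ H)) '' F) (hFne.image _) hdiam'
    obtain ⟨y₀, hy₀⟩ := hFne
    have hgU : (y₀ : G ⧸ H) ∈ U := hsub ⟨y₀, hy₀, rfl⟩
    obtain ⟨h, hh, hlt⟩ := hnear U hU y₀ hgU
    refine ⟨sheet U h, ⟨U, hU, h, hh, rfl⟩, fun y hy => ⟨hsub ⟨y, hy, rfl⟩, ?_⟩⟩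
    have := hd.triangle (base U * h) y₀ y
    have := hFdiam y₀ hy₀ y hy
    linarith
  · -- multiplicity
    intro W hWsub hWcard
    by_contra hne0
    obtain ⟨y, hy⟩ := Set.nonempty_iff_ne_empty.2 hne0
    let Φ : Set G → Set (G ⧸ H) := fun V =>
      if hV : ∃ U, U ∈ 𝒰 ∧ ∃ h, h ∈ H ∧ V = sheet U h then hV.choose else ∅
    have hΦ : ∀ V ∈ (W : Set (Set G)), Φ V ∈ 𝒰 ∧ ∃ h ∈ H, V = sheet (Φ V) h := by
      intro V hV
      obtain ⟨U, hU, h, hh, rfl⟩ := hWsub hV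
      have hV' : ∃ U', U' ∈ 𝒰 ∧ ∃ h', h' ∈ H ∧ sheet U h = sheet U' h' :=
        ⟨U, hU, h, hh, rfl⟩
      simp only [Φ, dif_pos hV']
      obtain ⟨hU', h', hh', heq⟩ := hV'.choose_spec
      exact ⟨hU', h', hh', heq⟩
    have hinj : Set.InjOn Φ (W : Set (Set G)) := by
      intro V₁ h₁ V₂ h₂ hEq
      obtain ⟨hU₁, a, ha, hVa⟩ := hΦ V₁ h₁
      obtain ⟨hU₂, b, hb, hVb⟩ := hΦ V₂ h₂
      have hy₁ : y ∈ V₁ := hy V₁ h₁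
      have hy₂ : y ∈ V₂ := hy V₂ h₂
      rw [hVa] at hy₁
      rw [hVb, ← hEq] at hy₂
      obtain ⟨-, hd₁⟩ := hy₁
      obtain ⟨-, hd₂⟩ := hy₂
      have htr := hd.triangle (base (Φ V₁) * a) y (base (Φ V₁) * b)
      rw [hd.symm y (base (Φ V₁) * b)] at htr
      have hab : a = b := hsep' (base (Φ V₁)) a b ha hb (by linarith)
      rw [hVa, hVb, ← hEq, hab]
    have hcard : n + 1 < (W.image Φ).card := by
      rw [Finset.card_image_of_injOn hinj]; exact hWcard
    have hsubU : ↑(W.image Φ) ⊆ 𝒰 := by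
      intro U hU
      simp only [Finset.coe_image, Set.mem_image, Finset.mem_coe] at hU
      obtain ⟨V, hV, rfl⟩ := hU
      exact (hΦ V hV).1
    have hempty := hmulU (W.image Φ) hsubU hcard
    have hmem : (y : G ⧸ H) ∈ ⋂₀ (↑(W.image Φ) : Set (Set (G ⧸ H))) := by
      intro U hU
      simp only [Finset.coe_image, Set.mem_image, Finset.mem_coe] at hU
      obtain ⟨V, hV, rfl⟩ := hU
      obtain ⟨-, h, hh, hVeq⟩ := hΦ V hV
      have hyV : y ∈ V := hy V hV
      rw [hVeq] at hyV
      exact hyV.1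
    rw [hempty] at hmem
    exact hmem
end
end
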